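/- Let H_n(x) = Σ_{k ≥ 0} H_n^k x^k where H_n^k = Σ_{j ≥ 0} M(n,j) C(n-2j, k-j). Then as formal power series in t and x, Σ_{n ≥ 0} t^n H_n(x) = 1 / (1 - t - xt - xt²). -/

import Mathlib

/-- The set of matchings of size `j` in the path graph on `n` vertices:
edges are indexed `0, …, n-2`, and a matching is a set of edge indices
pairwise differing by at least 2 (pairwise vertex-disjoint edges). -/
def pathMatchings (n j : ℕ) : Finset (Finset ℕ) :=
  ((Finset.range (n - 1)).powersetCard j).filter
    (fun s => ∀ a ∈ s, ∀ b ∈ s, a ≠ b → a + 2 ≤ b ∨ b + 2 ≤ a)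

/-- `M n j` = number of matchings of size `j` in the path graph `P_n`. -/
def M (n j : ℕ) : ℕ := (pathMatchings n j).card

/-- `H n k = Σ_{j ≥ 0} M(n,j) · C(n-2j, k-j)`.  Since `C(n-2j, k-j) = 0`
for `j > k`, the sum may be truncated at `j = k`. -/
def H (n k : ℕ) : ℕ := ∑ j ∈ Finset.range (k + 1), M n j * Nat.choose (n - 2 * j) (k - j)

open Finset

lemma mem_pathMatchings {n j : ℕ} {s : Finset ℕ} :
    s ∈ pathMatchings n j ↔ (∀ a ∈ s, a + 2 ≤ n) ∧ s.card = j ∧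
      (∀ a ∈ s, ∀ b ∈ s, a ≠ b → a + 2 ≤ b ∨ b + 2 ≤ a) := by
  simp only [pathMatchings, mem_filter, mem_powersetCard, Finset.subset_iff, mem_range, and_assoc]
  constructor
  · rintro ⟨h1, h2, h3⟩
    exact ⟨fun a ha => by have := h1 ha; omega, h2, h3⟩
  · rintro ⟨h1, h2, h3⟩
    exact ⟨fun {a} ha => by have := h1 a ha; omega, h2, h3⟩

lemma M_zero (n : ℕ) : M n 0 = 1 := by
  have : pathMatchings n 0 = {∅} := by
    ext s
    simp only [mem_pathMatchings, Finset.card_eq_zero, Finset.mem_singleton]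
    constructor
    · exact fun h => h.2.1
    · rintro rfl; simp
  simp [M, this]

lemma two_mul_le_of_mem {n j : ℕ} {s : Finset ℕ} (hs : s ∈ pathMatchings n j) : 2 * j ≤ n := by
  obtain ⟨h1, h2, h3⟩ := mem_pathMatchings.mp hs
  have hcard : s.card ≤ (Finset.range (n / 2)).card := by
    apply Finset.card_le_card_of_injOn (fun a => a / 2)
    · intro a ha
      simp only [Finset.mem_coe, mem_range]
      have := h1 a ha
      omega
    · intro a ha b hb hab
      by_contra h
      rcases h3 a ha b hb h with h' | h' <;> simp only at hab <;> omega
  simp only [Finset.card_range] at hcard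
  omega

lemma M_eq_zero {n j : ℕ} (h : n < 2 * j) : M n j = 0 := by
  rw [M, Finset.card_eq_zero]
  by_contra hne
  obtain ⟨s, hs⟩ := Finset.nonempty_iff_ne_empty.mpr hne
  have := two_mul_le_of_mem hs
  omega

lemma M_rec (n j : ℕ) : M (n + 2) (j + 1) = M (n + 1) (j + 1) + M n j := by
  classical
  rw [M, ← Finset.card_filter_add_card_filter_not (fun s => n ∉ s)]
  congr 1
  · -- matchings not containing the last edge `n`
    rw [M]
    congr 1
    ext s
    simp only [Finset.mem_filter, mem_pathMatchings]
    constructor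
    · rintro ⟨⟨h1, h2, h3⟩, hn⟩
      refine ⟨fun a ha => ?_, h2, h3⟩
      have hle := h1 a ha
      have hne : a ≠ n := fun h => hn (h ▸ ha)
      omega
    · rintro ⟨h1, h2, h3⟩
      refine ⟨⟨fun a ha => by have := h1 a ha; omega, h2, h3⟩, fun hn => by have := h1 n hn; omega⟩
  · -- matchings containing the last edge `n`
    simp only [not_not]
    rw [M]
    apply Finset.card_bij' (fun s _ => s.erase n) (fun t _ => insert n t) ?hi ?hj ?li ?ri
    case hi =>
      intro s hs
      simp only [Finset.mem_filter] at hs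
      obtain ⟨hs, hn⟩ := hs
      obtain ⟨h1, h2, h3⟩ := mem_pathMatchings.mp hs
      refine mem_pathMatchings.mpr ⟨?_, ?_, ?_⟩
      · intro a ha
        rw [Finset.mem_erase] at ha
        rcases h3 a ha.2 n hn ha.1 with h | h
        · omega
        · have := h1 a ha.2; omega
      · rw [Finset.card_erase_of_mem hn, h2]
        omega
      · intro a ha b hb hab
        exact h3 a (Finset.mem_of_mem_erase ha) b (Finset.mem_of_mem_erase hb) hab
    case hj =>
      intro t ht
      obtain ⟨h1, h2, h3⟩ := mem_pathMatchings.mp ht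
      have hnt : n ∉ t := fun h => by have := h1 n h; omega
      simp only [Finset.mem_filter]
      refine ⟨mem_pathMatchings.mpr ⟨?_, ?_, ?_⟩, Finset.mem_insert_self n t⟩
      · intro a ha
        rcases Finset.mem_insert.mp ha with rfl | ha'
        · omega
        · have := h1 a ha'; omega
      · rw [Finset.card_insert_of_notMem hnt, h2]
      · intro a ha b hb hab
        rcases Finset.mem_insert.mp ha with rfl | ha'
        · rcases Finset.mem_insert.mp hb with rfl | hb'
          · omega
          · have := h1 b hb'; omega
        · rcases Finset.mem_insert.mp hb with rfl | hb'
          · have := h1 a ha'; omega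
          · exact h3 a ha' b hb' hab
    case li =>
      intro s hs
      simp only [Finset.mem_filter] at hs
      exact Finset.insert_erase hs.2
    case ri =>
      intro t ht
      obtain ⟨h1, _, _⟩ := mem_pathMatchings.mp ht
      have hnt : n ∉ t := fun h => by have := h1 n h; omega
      exact Finset.erase_insert hnt

lemma H_zero (n : ℕ) : H n 0 = 1 := by
  simp [H, M_zero]

lemma H_eq_zero {n k : ℕ} (h : n < k) : H n k = 0 := by
  rw [H]
  apply Finset.sum_eq_zero
  intro j hj
  simp only [mem_range] at hj
  rcases le_or_gt (2 * j) n with h2 | h2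
  · rw [Nat.choose_eq_zero_of_lt (by omega), mul_zero]
  · rw [M_eq_zero h2, zero_mul]

lemma H_rec (n k : ℕ) : H (n + 2) (k + 1) = H (n + 1) (k + 1) + H (n + 1) k + H n k := by
  have key : H (n + 1) (k + 1) + H (n + 1) k
      = ∑ j ∈ Finset.range (k + 2), M (n + 1) j * Nat.choose (n + 2 - 2 * j) (k + 1 - j) := by
    rw [H, H, Finset.sum_range_succ,
      Finset.sum_range_succ (f := fun j => M (n + 1) j * Nat.choose (n + 2 - 2 * j) (k + 1 - j)),
      add_right_comm, ← Finset.sum_add_distrib]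
    congr 1
    · apply Finset.sum_congr rfl
      intro j hj
      simp only [mem_range] at hj
      rcases Nat.eq_zero_or_pos (M (n + 1) j) with hM | hM
      · simp [hM]
      · have h2j : 2 * j ≤ n + 1 := by
          by_contra hc
          rw [M_eq_zero (by omega)] at hM
          omega
        rw [← mul_add]
        congr 1
        have e1 : n + 2 - 2 * j = (n + 1 - 2 * j) + 1 := by omega
        have e2 : k + 1 - j = (k - j) + 1 := by omega
        rw [e1, e2, Nat.choose_succ_succ]
        simp only [Nat.succ_eq_add_one]
        omega
    · rcases Nat.eq_zero_or_pos (M (n + 1) (k + 1)) with hM | hM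
      · simp [hM]
      · have h2j : 2 * (k + 1) ≤ n + 1 := by
          by_contra hc
          rw [M_eq_zero (by omega)] at hM
          omega
        have e1 : k + 1 - (k + 1) = 0 := by omega
        rw [e1]
        simp
  rw [key, H, H]
  rw [Finset.sum_range_succ' (f := fun j => M (n + 2) j * Nat.choose (n + 2 - 2 * j) (k + 1 - j))]
  rw [Finset.sum_range_succ' (f := fun j => M (n + 1) j * Nat.choose (n + 2 - 2 * j) (k + 1 - j))]
  have e3 : ∀ i, n + 2 - 2 * (i + 1) = n - 2 * i := fun i => by omega
  have e4 : ∀ i, k + 1 - (i + 1) = k - i := fun i => by omega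
  simp only [M_rec, M_zero, add_mul, e3, e4, mul_zero, Nat.sub_zero, one_mul]
  rw [Finset.sum_add_distrib]
  ring

open Polynomial

/-- The polynomial `H_n(x)`. -/
noncomputable def Pn (n : ℕ) : Polynomial ℚ :=
  ∑ k ∈ Finset.range (n + 1), Polynomial.C (H n k : ℚ) * Polynomial.X ^ k

lemma Pn_eq (n N : ℕ) (h : n ≤ N) :
    ∑ k ∈ Finset.range (N + 1), Polynomial.C (H n k : ℚ) * Polynomial.X ^ k = Pn n := by
  rw [Pn]
  symm
  apply Finset.sum_subset (Finset.range_subset_range.mpr (by omega))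
  intro k _ hk
  simp only [mem_range, not_lt] at hk
  rw [H_eq_zero (by omega)]
  simp

lemma Pn_zero : Pn 0 = 1 := by
  simp [Pn, H_zero]

lemma Pn_one : Pn 1 = 1 + Polynomial.X := by
  have h11 : H 1 1 = 1 := by decide
  simp [Pn, Finset.sum_range_succ, H_zero, h11]

lemma Pn_rec (n : ℕ) :
    Pn (n + 2) = Pn (n + 1) + Polynomial.X * Pn (n + 1) + Polynomial.X * Pn n := by
  rw [Pn, Finset.sum_range_succ']
  simp only [H_rec, H_zero, pow_zero, mul_one, Nat.cast_add, map_add, Nat.cast_one, map_one]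
  simp only [add_mul]
  rw [Finset.sum_add_distrib, Finset.sum_add_distrib]
  have S1 : (∑ i ∈ Finset.range (n + 2), Polynomial.C (H (n + 1) (i + 1) : ℚ) * Polynomial.X ^ (i + 1))
      + 1 = Pn (n + 1) := by
    rw [← Pn_eq (n + 1) (n + 2) (by omega),
      Finset.sum_range_succ' (fun k => Polynomial.C (H (n + 1) k : ℚ) * Polynomial.X ^ k) (n + 2)]
    simp [H_zero]
  have S2 : (∑ i ∈ Finset.range (n + 2), Polynomial.C (H (n + 1) i : ℚ) * Polynomial.X ^ (i + 1))
      = Polynomial.X * Pn (n + 1) := by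
    rw [Pn, Finset.mul_sum]
    apply Finset.sum_congr rfl
    intro i _
    ring
  have S3 : (∑ i ∈ Finset.range (n + 2), Polynomial.C (H n i : ℚ) * Polynomial.X ^ (i + 1))
      = Polynomial.X * Pn n := by
    rw [← Pn_eq n (n + 1) (by omega), Finset.mul_sum]
    apply Finset.sum_congr rfl
    intro i _
    ring
  rw [S2, S3, ← S1]
  ring

open PowerSeries in
/-- `(1 - t - xt - xt²) · Σ_{n ≥ 0} t^n H_n(x) = 1` as a formal power series in `t`
with coefficients in `ℚ[x]`, where `H_n(x) = Σ_k H_n^k x^k`. -/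
theorem H_generating_function :
    (1 - PowerSeries.X - PowerSeries.C (Polynomial.X : Polynomial ℚ) * PowerSeries.X
        - PowerSeries.C (Polynomial.X : Polynomial ℚ) * PowerSeries.X ^ 2) *
      PowerSeries.mk (fun n => ∑ k ∈ Finset.range (n + 1),
        Polynomial.C (H n k : ℚ) * Polynomial.X ^ k) = 1 := by
  have hmk : PowerSeries.mk (fun n => ∑ k ∈ Finset.range (n + 1),
      Polynomial.C (H n k : ℚ) * Polynomial.X ^ k) = PowerSeries.mk (fun n => Pn n) := by
    congr 1
  rw [hmk]
  ext n
  rw [sub_mul, sub_mul, sub_mul, one_mul]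
  simp only [map_sub, sq, mul_assoc]
  rcases n with _ | _ | n
  · simp [PowerSeries.coeff_zero_eq_constantCoeff, Pn_zero]
  · rw [show (1 : ℕ) = 0 + 1 from rfl]
    simp only [PowerSeries.coeff_succ_X_mul, PowerSeries.coeff_C_mul, PowerSeries.coeff_mk,
      PowerSeries.coeff_one, PowerSeries.coeff_zero_eq_constantCoeff, map_mul,
      PowerSeries.constantCoeff_X, zero_mul, mul_zero]
    simp [Pn_zero, Pn_one]
  · rw [show n + 1 + 1 = n + 1 + 1 from rfl]
    simp only [PowerSeries.coeff_succ_X_mul, PowerSeries.coeff_C_mul, PowerSeries.coeff_mk,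
      PowerSeries.coeff_one]
    rw [Pn_rec n]
    simp only [Nat.add_eq_zero, and_false, Nat.succ_ne_zero, if_false, OfNat.ofNat_ne_zero]
    ring
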